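/- (Smash product relation for M₂.) In the depth-2 Jones tower setup, let b ∈ B and let (b₁⁽ⁱ⁾, b₂⁽ⁱ⁾)_{i=1,…,m} be any finite family of pairs of elements of B satisfying ∑ᵢ F(a e₂ e₁ b₁⁽ⁱ⁾) F(a' e₂ e₁ b₂⁽ⁱ⁾) = λ² F(a a' e₂ e₁ b) for all a, a' ∈ A (a representative of the comultiplication Δ(b) determined by the pairing ⟨a,b⟩ = λ⁻²F(a e₂ e₁ b)). Then for every y ∈ M₁: b y = λ⁻¹ ∑ᵢ E_{M₁}(b₁⁽ⁱ⁾ y e₂) · b₂⁽ⁱ⁾, i.e., b y = ∑ᵢ (b₁⁽ⁱ⁾ ⊳ y) b₂⁽ⁱ⁾ where b ⊳ y := λ⁻¹E_{M₁}(b y e₂). Together with the bijectivity of the multiplication map M₁ ⊗_k B → M₂, this says M₂ is isomorphic to the smash product M₁ # B via x ⊗ b ↦ xb. -/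
import Mathlib


open scoped TensorProduct

/-- The depth-2 Jones tower setup: a tower `N ⊆ M ⊆ M₁ ⊆ R` (with `R` playing the
role of `M₂`) of unital `k`-algebras, with conditional expectations, Jones idempotents,
braid-like relations and depth-2 orthogonal dual bases, as in the paper. -/
structure JonesTower (k : Type*) [Field k] (R : Type*) [Ring R] [Algebra k R] where
  N : Subalgebra k R
  M : Subalgebra k R
  M₁ : Subalgebra k R
  hNM : N ≤ M
  hMM₁ : M ≤ M₁
  lam : k
  hlam : lam ≠ 0
  E : R →ₗ[k] R
  EM : R →ₗ[k] R
  EM1 : R →ₗ[k] R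
  hE_mem : ∀ m ∈ M, E m ∈ N
  hEM_mem : ∀ x ∈ M₁, EM x ∈ M
  hEM1_mem : ∀ x : R, EM1 x ∈ M₁
  hE_one : E 1 = 1
  hEM_one : EM 1 = 1
  hEM1_one : EM1 1 = 1
  hE_bimod : ∀ n ∈ N, ∀ n' ∈ N, ∀ m ∈ M, E (n * m * n') = n * E m * n'
  hEM_bimod : ∀ m ∈ M, ∀ m' ∈ M, ∀ x ∈ M₁, EM (m * x * m') = m * EM x * m'
  hEM1_bimod : ∀ w ∈ M₁, ∀ w' ∈ M₁, ∀ x : R, EM1 (w * x * w') = w * EM1 x * w'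
  n₀ : ℕ
  xb : Fin n₀ → R
  yb : Fin n₀ → R
  hxb : ∀ i, xb i ∈ M
  hyb : ∀ i, yb i ∈ M
  hE_dual₁ : ∀ m ∈ M, ∑ i, E (m * xb i) * yb i = m
  hE_dual₂ : ∀ m ∈ M, ∑ i, xb i * E (yb i * m) = m
  hE_index : ∑ i, xb i * yb i = lam⁻¹ • (1 : R)
  hCMN : ∀ c ∈ M, (∀ n ∈ N, c * n = n * c) → ∃ μ : k, c = μ • (1 : R)
  hCM₁M : ∀ c ∈ M₁, (∀ m ∈ M, c * m = m * c) → ∃ μ : k, c = μ • (1 : R)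
  hCM₂M₁ : ∀ c : R, (∀ w ∈ M₁, c * w = w * c) → ∃ μ : k, c = μ • (1 : R)
  e₁ : R
  e₂ : R
  he₁ : e₁ ∈ M₁
  he₁N : ∀ n ∈ N, e₁ * n = n * e₁
  he₂M : ∀ m ∈ M, e₂ * m = m * e₂
  he₁me₁ : ∀ m ∈ M, e₁ * m * e₁ = E m * e₁
  he₂we₂ : ∀ w ∈ M₁, e₂ * w * e₂ = EM w * e₂
  hEMe₁ : EM e₁ = lam • (1 : R)
  hEM1e₂ : EM1 e₂ = lam • (1 : R)
  hspanM₁ : Subalgebra.toSubmodule M₁ =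
    Submodule.span k {x : R | ∃ m ∈ M, ∃ m' ∈ M, x = m * e₁ * m'}
  hspanM₂ : (⊤ : Submodule k R) =
    Submodule.span k {x : R | ∃ w ∈ M₁, ∃ w' ∈ M₁, x = w * e₂ * w'}
  hbraid₁ : e₁ * e₂ * e₁ = lam • e₁
  hbraid₂ : e₂ * e₁ * e₂ = lam • e₂
  r : ℕ
  zb : Fin r → R
  wb : Fin r → R
  hzbM₁ : ∀ i, zb i ∈ M₁
  hwbM₁ : ∀ i, wb i ∈ M₁
  hzbN : ∀ i, ∀ n ∈ N, zb i * n = n * zb i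
  hwbN : ∀ i, ∀ n ∈ N, wb i * n = n * wb i
  hzw_orth : ∀ i j, EM (wb i * zb j) = if i = j then (1 : R) else 0
  hzw_dual₁ : ∀ x ∈ M₁, ∑ i, EM (x * zb i) * wb i = x
  hzw_dual₂ : ∀ x ∈ M₁, ∑ i, zb i * EM (wb i * x) = x
  hzw_index : ∑ i, zb i * wb i = lam⁻¹ • (1 : R)
  s : ℕ
  ub : Fin s → R
  vb : Fin s → R
  hubM : ∀ i, ∀ m ∈ M, ub i * m = m * ub i
  hvbM : ∀ i, ∀ m ∈ M, vb i * m = m * vb i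
  huv_orth : ∀ i j, EM1 (vb i * ub j) = if i = j then (1 : R) else 0
  huv_dual₁ : ∀ x : R, ∑ i, EM1 (x * ub i) * vb i = x
  huv_dual₂ : ∀ x : R, ∑ i, ub i * EM1 (vb i * x) = x
  huv_index : ∑ i, ub i * vb i = lam⁻¹ • (1 : R)
  F : R →ₗ[k] k
  hF : ∀ c : R, (∀ n ∈ N, c * n = n * c) → algebraMap k R (F c) = EM (EM1 c)

variable {k : Type*} [Field k] {R : Type*} [Ring R] [Algebra k R]

/-- The second centralizer `A = C_{M₁}(N)`. -/
def JonesTower.A (T : JonesTower k R) : Subalgebra k R :=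
  T.M₁ ⊓ Subalgebra.centralizer k (T.N : Set R)

/-- The second centralizer `B = C_{M₂}(M)`. -/
def JonesTower.B (T : JonesTower k R) : Subalgebra k R :=
  Subalgebra.centralizer k (T.M : Set R)

/-- The big centralizer `C = C_{M₂}(N)`. -/
def JonesTower.C (T : JonesTower k R) : Subalgebra k R :=
  Subalgebra.centralizer k (T.N : Set R)


namespace JonesTower

variable (T : JonesTower k R)

section Aux

lemma comm_mul {n p q : R} (hp : p * n = n * p) (hq : q * n = n * q) :
    (p * q) * n = n * (p * q) := by
  rw [mul_assoc, hq, ← mul_assoc, hp, mul_assoc]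

lemma B_comm {x : R} (hx : x ∈ T.B) {m : R} (hm : m ∈ T.M) : m * x = x * m :=
  hx m hm

lemma mem_B {x : R} (h : ∀ m ∈ T.M, m * x = x * m) : x ∈ T.B := h

lemma mem_A {x : R} (h1 : x ∈ T.M₁) (h2 : ∀ n ∈ T.N, n * x = x * n) : x ∈ T.A :=
  (⟨h1, h2⟩ : x ∈ T.M₁ ∧ x ∈ Subalgebra.centralizer k (T.N : Set R))

lemma A_comm {x : R} (hx : x ∈ T.A) {n : R} (hn : n ∈ T.N) : n * x = x * n :=
  (hx : x ∈ T.M₁ ∧ x ∈ Subalgebra.centralizer k (T.N : Set R)).2 n hn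

lemma A_memM₁ {x : R} (hx : x ∈ T.A) : x ∈ T.M₁ :=
  (hx : x ∈ T.M₁ ∧ x ∈ Subalgebra.centralizer k (T.N : Set R)).1

lemma EM1_left {w : R} (hw : w ∈ T.M₁) (x : R) : T.EM1 (w * x) = w * T.EM1 x := by
  have := T.hEM1_bimod w hw 1 (one_mem _) x; simpa using this

lemma EM1_right {w : R} (hw : w ∈ T.M₁) (x : R) : T.EM1 (x * w) = T.EM1 x * w := by
  have := T.hEM1_bimod 1 (one_mem _) w hw x; simpa using this

lemma EM_right {m : R} (hm : m ∈ T.M) {x : R} (hx : x ∈ T.M₁) :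
    T.EM (x * m) = T.EM x * m := by
  have := T.hEM_bimod 1 (one_mem _) m hm x hx; simpa using this

lemma EM_left {m : R} (hm : m ∈ T.M) {x : R} (hx : x ∈ T.M₁) :
    T.EM (m * x) = m * T.EM x := by
  have := T.hEM_bimod m hm 1 (one_mem _) x hx; simpa using this

lemma EM_scalar {α : R} (h1 : α ∈ T.M₁) (h2 : ∀ n ∈ T.N, α * n = n * α) :
    ∃ μ : k, T.EM α = μ • 1 := by
  apply T.hCMN _ (T.hEM_mem α h1)
  intro n hn
  have hn' : n ∈ T.M := T.hNM hn
  calc T.EM α * n = T.EM (α * n) := (T.EM_right hn' h1).symm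
    _ = T.EM (n * α) := by rw [h2 n hn]
    _ = n * T.EM α := T.EM_left hn' h1

lemma EM1_scalar {β : R} (h2 : ∀ m ∈ T.M, m * β = β * m) :
    ∃ μ : k, T.EM1 β = μ • 1 := by
  apply T.hCM₁M _ (T.hEM1_mem β)
  intro m hm
  have hm₁ : m ∈ T.M₁ := T.hMM₁ hm
  calc T.EM1 β * m = T.EM1 (β * m) := (T.EM1_right hm₁ β).symm
    _ = T.EM1 (m * β) := by rw [h2 m hm]
    _ = m * T.EM1 β := T.EM1_left hm₁ β

lemma sum_xey : ∑ i, T.xb i * T.e₁ * T.yb i = 1 := by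
  have key : ∀ m ∈ T.M, (∑ i, T.xb i * T.e₁ * T.yb i) * (m * T.e₁) = m * T.e₁ := by
    intro m hm
    rw [Finset.sum_mul]
    have hterm : ∀ i : Fin T.n₀, T.xb i * T.e₁ * T.yb i * (m * T.e₁)
        = T.xb i * T.E (T.yb i * m) * T.e₁ := by
      intro i
      have h1 : T.e₁ * (T.yb i * m) * T.e₁ = T.E (T.yb i * m) * T.e₁ :=
        T.he₁me₁ _ (mul_mem (T.hyb i) hm)
      calc T.xb i * T.e₁ * T.yb i * (m * T.e₁)
          = T.xb i * (T.e₁ * (T.yb i * m) * T.e₁) := by simp only [mul_assoc]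
        _ = T.xb i * (T.E (T.yb i * m) * T.e₁) := by rw [h1]
        _ = T.xb i * T.E (T.yb i * m) * T.e₁ := by simp only [mul_assoc]
    rw [Finset.sum_congr rfl fun i _ => hterm i, ← Finset.sum_mul, T.hE_dual₂ m hm]
  have main : ∀ t ∈ Submodule.span k {x : R | ∃ m ∈ T.M, ∃ m' ∈ T.M, x = m * T.e₁ * m'},
      (∑ i, T.xb i * T.e₁ * T.yb i) * t = t := by
    intro t ht
    induction ht using Submodule.span_induction with
    | mem x h =>
        obtain ⟨p, hp, q, hq, rfl⟩ := h
        calc (∑ i, T.xb i * T.e₁ * T.yb i) * (p * T.e₁ * q)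
            = ((∑ i, T.xb i * T.e₁ * T.yb i) * (p * T.e₁)) * q := by simp only [mul_assoc]
          _ = p * T.e₁ * q := by rw [key p hp]
    | zero => simp
    | add x y hx hy ihx ihy => rw [mul_add, ihx, ihy]
    | smul a x hx ih => rw [mul_smul_comm, ih]
  have h1 : (1 : R) ∈ Submodule.span k {x : R | ∃ m ∈ T.M, ∃ m' ∈ T.M, x = m * T.e₁ * m'} := by
    rw [← T.hspanM₁]; exact one_mem T.M₁
  simpa using main 1 h1

lemma e₂_EM1 (x : R) : T.e₂ * T.EM1 (T.e₂ * x) = T.lam • (T.e₂ * x) := by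
  have hx : x ∈ Submodule.span k {x : R | ∃ w ∈ T.M₁, ∃ w' ∈ T.M₁, x = w * T.e₂ * w'} := by
    rw [← T.hspanM₂]; exact Submodule.mem_top
  induction hx using Submodule.span_induction with
  | mem x h =>
      obtain ⟨w, hw, w', hw', rfl⟩ := h
      have hwM : T.EM w ∈ T.M₁ := T.hMM₁ (T.hEM_mem w hw)
      have h0 : T.e₂ * (w * T.e₂ * w') = T.EM w * T.e₂ * w' := by
        rw [← mul_assoc, ← mul_assoc, T.he₂we₂ w hw]
      have h1 : T.EM1 (T.e₂ * (w * T.e₂ * w')) = T.lam • (T.EM w * w') := by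
        rw [h0, T.hEM1_bimod (T.EM w) hwM w' hw' T.e₂, T.hEM1e₂,
          mul_smul_comm, smul_mul_assoc, mul_one]
      rw [h1, mul_smul_comm, h0]
      congr 1
      rw [← mul_assoc, T.he₂M _ (T.hEM_mem w hw), mul_assoc]
  | zero => simp
  | add x y hx hy ihx ihy =>
      simp only [mul_add, map_add, smul_add]
      rw [ihx, ihy]
  | smul a x hx ih =>
      simp only [mul_smul_comm, map_smul]
      rw [ih, smul_comm]


def phi (x : R) : R := T.EM1 (T.e₂ * (T.e₁ * x))

lemma phi_memM₁ (x : R) : T.phi x ∈ T.M₁ := T.hEM1_mem _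

lemma e₂e₁_eq (x : R) : T.e₂ * (T.e₁ * x) = T.lam⁻¹ • (T.e₂ * T.phi x) := by
  rw [eq_comm, inv_smul_eq_iff₀ T.hlam]
  exact T.e₂_EM1 (T.e₁ * x)

lemma e₁_mul (x : R) : T.e₁ * x = (T.lam⁻¹ * T.lam⁻¹) • (T.e₁ * (T.e₂ * T.phi x)) := by
  have h1 : T.e₁ * (T.e₂ * (T.e₁ * x)) = T.lam⁻¹ • (T.e₁ * (T.e₂ * T.phi x)) := by
    rw [T.e₂e₁_eq x, mul_smul_comm]
  have h2 : T.e₁ * (T.e₂ * (T.e₁ * x)) = T.lam • (T.e₁ * x) := by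
    calc T.e₁ * (T.e₂ * (T.e₁ * x)) = (T.e₁ * T.e₂ * T.e₁) * x := by simp only [mul_assoc]
      _ = T.lam • (T.e₁ * x) := by rw [T.hbraid₁, smul_mul_assoc]
  have h3 := h2.symm.trans h1
  calc T.e₁ * x = T.lam⁻¹ • (T.lam • (T.e₁ * x)) := (inv_smul_smul₀ T.hlam _).symm
    _ = T.lam⁻¹ • (T.lam⁻¹ • (T.e₁ * (T.e₂ * T.phi x))) := by rw [h3]
    _ = (T.lam⁻¹ * T.lam⁻¹) • (T.e₁ * (T.e₂ * T.phi x)) := smul_smul _ _ _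

lemma B_repr {b' : R} (hb' : b' ∈ T.B) :
    b' = (T.lam⁻¹ * T.lam⁻¹) • ∑ p, T.xb p * (T.e₁ * (T.e₂ * (T.phi b' * T.yb p))) := by
  have hterm : ∀ p, T.xb p * T.e₁ * T.yb p * b'
      = (T.lam⁻¹ * T.lam⁻¹) • (T.xb p * (T.e₁ * (T.e₂ * (T.phi b' * T.yb p)))) := by
    intro p
    calc T.xb p * T.e₁ * T.yb p * b' = T.xb p * (T.e₁ * (T.yb p * b')) := by
          simp only [mul_assoc]
      _ = T.xb p * (T.e₁ * (b' * T.yb p)) := by rw [T.B_comm hb' (T.hyb p)]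
      _ = T.xb p * ((T.e₁ * b') * T.yb p) := by rw [mul_assoc]
      _ = T.xb p * (((T.lam⁻¹ * T.lam⁻¹) • (T.e₁ * (T.e₂ * T.phi b'))) * T.yb p) := by
          rw [← T.e₁_mul b']
      _ = (T.lam⁻¹ * T.lam⁻¹) • (T.xb p * (T.e₁ * (T.e₂ * (T.phi b' * T.yb p)))) := by
          rw [smul_mul_assoc, mul_smul_comm]
          congr 1
          simp only [mul_assoc]
  calc b' = (∑ i, T.xb i * T.e₁ * T.yb i) * b' := by rw [T.sum_xey, one_mul]
    _ = ∑ i, T.xb i * T.e₁ * T.yb i * b' := by rw [Finset.sum_mul]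
    _ = ∑ i, (T.lam⁻¹ * T.lam⁻¹) • (T.xb i * (T.e₁ * (T.e₂ * (T.phi b' * T.yb i)))) :=
        Finset.sum_congr rfl fun i _ => hterm i
    _ = (T.lam⁻¹ * T.lam⁻¹) • ∑ i, T.xb i * (T.e₁ * (T.e₂ * (T.phi b' * T.yb i))) :=
        (Finset.smul_sum).symm

lemma phi_commN {x : R} (hx : x ∈ T.B) : ∀ n ∈ T.N, T.phi x * n = n * T.phi x := by
  intro n hn
  have hnM : n ∈ T.M := T.hNM hn
  have hnM₁ : n ∈ T.M₁ := T.hMM₁ hnM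
  have h : (T.e₂ * (T.e₁ * x)) * n = n * (T.e₂ * (T.e₁ * x)) :=
    comm_mul (T.he₂M n hnM) (comm_mul (T.he₁N n hn) (T.B_comm hx hnM).symm)
  calc T.phi x * n = T.EM1 ((T.e₂ * (T.e₁ * x)) * n) := (T.EM1_right hnM₁ _).symm
    _ = T.EM1 (n * (T.e₂ * (T.e₁ * x))) := by rw [h]
    _ = n * T.phi x := T.EM1_left hnM₁ _

lemma EM1_pair {a : R} (ha : a ∈ T.M₁) (x : R) :
    T.EM1 (a * T.e₂ * T.e₁ * x) = a * T.phi x := by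
  have h1 : a * T.e₂ * T.e₁ * x = T.lam⁻¹ • (a * T.e₂ * T.phi x) := by
    calc a * T.e₂ * T.e₁ * x = a * (T.e₂ * (T.e₁ * x)) := by simp only [mul_assoc]
      _ = a * (T.lam⁻¹ • (T.e₂ * T.phi x)) := by rw [T.e₂e₁_eq]
      _ = T.lam⁻¹ • (a * T.e₂ * T.phi x) := by rw [mul_smul_comm, mul_assoc]
  rw [h1, map_smul, T.hEM1_bimod a ha (T.phi x) (T.phi_memM₁ x) T.e₂, T.hEM1e₂,
    mul_smul_comm, smul_mul_assoc, mul_one, smul_smul, inv_mul_cancel₀ T.hlam, one_smul]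

lemma F_pair {a : R} (ha : a ∈ T.A) {x : R} (hx : x ∈ T.B) :
    algebraMap k R (T.F (a * T.e₂ * T.e₁ * x)) = T.EM (a * T.phi x) := by
  have hcomm : ∀ n ∈ T.N, (a * T.e₂ * T.e₁ * x) * n = n * (a * T.e₂ * T.e₁ * x) := by
    intro n hn
    exact comm_mul (comm_mul (comm_mul (T.A_comm ha hn).symm
      (T.he₂M n (T.hNM hn))) (T.he₁N n hn)) (T.B_comm hx (T.hNM hn)).symm
  rw [T.hF _ hcomm, T.EM1_pair (T.A_memM₁ ha)]
lemma DeltaR {b : R} (hb : b ∈ T.B) {m : ℕ} {b₁ b₂ : Fin m → R}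
    (hb₁ : ∀ i, b₁ i ∈ T.B) (hb₂ : ∀ i, b₂ i ∈ T.B)
    (hΔ : ∀ a ∈ T.A, ∀ a' ∈ T.A,
      ∑ i, T.F (a * T.e₂ * T.e₁ * b₁ i) * T.F (a' * T.e₂ * T.e₁ * b₂ i) =
        T.lam ^ 2 * T.F (a * a' * T.e₂ * T.e₁ * b))
    {a a' : R} (ha : a ∈ T.A) (ha' : a' ∈ T.A) :
    ∑ t, T.EM (a * T.phi (b₁ t)) * T.EM (a' * T.phi (b₂ t))
      = T.lam ^ 2 • T.EM (a * a' * T.phi b) := by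
  calc ∑ t, T.EM (a * T.phi (b₁ t)) * T.EM (a' * T.phi (b₂ t))
      = ∑ t, algebraMap k R (T.F (a * T.e₂ * T.e₁ * b₁ t))
          * algebraMap k R (T.F (a' * T.e₂ * T.e₁ * b₂ t)) := by
        refine Finset.sum_congr rfl fun t _ => ?_
        rw [T.F_pair ha (hb₁ t), T.F_pair ha' (hb₂ t)]
    _ = algebraMap k R (∑ t, T.F (a * T.e₂ * T.e₁ * b₁ t) * T.F (a' * T.e₂ * T.e₁ * b₂ t)) := by
        rw [map_sum]
        exact Finset.sum_congr rfl fun t _ => (map_mul _ _ _).symm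
    _ = algebraMap k R (T.lam ^ 2 * T.F (a * a' * T.e₂ * T.e₁ * b)) := by
        rw [hΔ a ha a' ha']
    _ = T.lam ^ 2 • T.EM (a * a' * T.phi b) := by
        rw [map_mul, T.F_pair (mul_mem ha ha') hb, ← Algebra.smul_def]

def ach (d : Fin T.r) : R := ∑ i, T.EM (T.zb i * T.zb d) * T.wb i

lemma zz_scalar (i d : Fin T.r) : ∃ μ : k, T.EM (T.zb i * T.zb d) = μ • 1 :=
  T.EM_scalar (mul_mem (T.hzbM₁ i) (T.hzbM₁ d))
    (fun n hn => comm_mul (T.hzbN i n hn) (T.hzbN d n hn))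

lemma ach_memM₁ (d : Fin T.r) : T.ach d ∈ T.M₁ :=
  sum_mem fun i _ => mul_mem (T.hMM₁ (T.hEM_mem _ (mul_mem (T.hzbM₁ i) (T.hzbM₁ d))))
    (T.hwbM₁ i)

lemma ach_mem (d : Fin T.r) : T.ach d ∈ T.A := by
  refine T.mem_A (T.ach_memM₁ d) fun n hn => ?_
  rw [ach, Finset.mul_sum, Finset.sum_mul]
  refine Finset.sum_congr rfl fun i _ => ?_
  obtain ⟨μ, hμ⟩ := T.zz_scalar i d
  rw [hμ]
  have h2 := T.hwbN i n hn
  calc n * (μ • 1 * T.wb i) = μ • (n * T.wb i) := by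
        rw [smul_mul_assoc, one_mul, mul_smul_comm]
    _ = μ • (T.wb i * n) := by rw [← h2]
    _ = μ • 1 * T.wb i * n := by rw [smul_mul_assoc, smul_mul_assoc, one_mul]

lemma EM_transp (d : Fin T.r) {γ : R} (hγ₁ : γ ∈ T.M₁)
    (hγN : ∀ n ∈ T.N, γ * n = n * γ) :
    T.EM (T.ach d * γ) = T.EM (γ * T.zb d) := by
  have hwγ : ∀ i : Fin T.r, ∃ ν : k, T.EM (T.wb i * γ) = ν • 1 := fun i =>
    T.EM_scalar (mul_mem (T.hwbM₁ i) hγ₁) (fun n hn => comm_mul (T.hwbN i n hn) (hγN n hn))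
  have hL : T.EM (T.ach d * γ) = ∑ i, T.EM (T.zb i * T.zb d) * T.EM (T.wb i * γ) := by
    rw [ach, Finset.sum_mul, map_sum]
    refine Finset.sum_congr rfl fun i _ => ?_
    obtain ⟨μ, hμ⟩ := T.zz_scalar i d
    rw [hμ, smul_mul_assoc, one_mul, smul_mul_assoc, map_smul, smul_mul_assoc, one_mul]
  have hR : T.EM (γ * T.zb d) = ∑ i, T.EM (T.zb i * T.zb d) * T.EM (T.wb i * γ) := by
    conv_lhs => rw [← T.hzw_dual₂ γ hγ₁]
    rw [Finset.sum_mul, map_sum]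
    refine Finset.sum_congr rfl fun i _ => ?_
    obtain ⟨ν, hν⟩ := hwγ i
    obtain ⟨μ, hμ⟩ := T.zz_scalar i d
    rw [hν, hμ]
    calc T.EM (T.zb i * (ν • 1) * T.zb d) = ν • T.EM (T.zb i * T.zb d) := by
          rw [mul_smul_comm, mul_one, smul_mul_assoc, map_smul]
      _ = ν • (μ • (1 : R)) := by rw [hμ]
      _ = μ • 1 * ν • 1 := by
          rw [smul_mul_assoc, one_mul, smul_smul, smul_smul, mul_comm]
  rw [hL, hR]
variable {b : R} {m : ℕ} {b₁ b₂ : Fin m → R}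

lemma copro_z (hb : b ∈ T.B) (hb₁ : ∀ i, b₁ i ∈ T.B) (hb₂ : ∀ i, b₂ i ∈ T.B)
    (hΔ : ∀ a ∈ T.A, ∀ a' ∈ T.A,
      ∑ i, T.F (a * T.e₂ * T.e₁ * b₁ i) * T.F (a' * T.e₂ * T.e₁ * b₂ i) =
        T.lam ^ 2 * T.F (a * a' * T.e₂ * T.e₁ * b))
    (d : Fin T.r) :
    ∑ t, T.phi (b₂ t) * T.EM (T.phi (b₁ t) * T.zb d)
      = T.lam ^ 2 • (T.phi b * T.zb d) := by
  have hwA : ∀ c : Fin T.r, T.wb c ∈ T.A := fun c =>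
    T.mem_A (T.hwbM₁ c) (fun n hn => (T.hwbN c n hn).symm)
  have step1 : ∀ t : Fin m, T.phi (b₂ t) * T.EM (T.phi (b₁ t) * T.zb d)
      = ∑ c, T.zb c * (T.EM (T.ach d * T.phi (b₁ t)) * T.EM (T.wb c * T.phi (b₂ t))) := by
    intro t
    obtain ⟨σ, hσ⟩ := T.EM_scalar (mul_mem (T.phi_memM₁ (b₁ t)) (T.hzbM₁ d))
      (fun n hn => comm_mul (T.phi_commN (hb₁ t) n hn) (T.hzbN d n hn))
    have htr : T.EM (T.ach d * T.phi (b₁ t)) = T.EM (T.phi (b₁ t) * T.zb d) :=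
      T.EM_transp d (T.phi_memM₁ (b₁ t)) (T.phi_commN (hb₁ t))
    conv_lhs => rw [← T.hzw_dual₂ (T.phi (b₂ t)) (T.phi_memM₁ (b₂ t))]
    rw [Finset.sum_mul]
    refine Finset.sum_congr rfl fun c _ => ?_
    rw [htr, hσ]
    calc T.zb c * T.EM (T.wb c * T.phi (b₂ t)) * σ • 1
        = σ • (T.zb c * T.EM (T.wb c * T.phi (b₂ t))) := by
          rw [mul_smul_comm, mul_one]
      _ = T.zb c * (σ • 1 * T.EM (T.wb c * T.phi (b₂ t))) := by
          rw [smul_mul_assoc, one_mul, mul_smul_comm]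
  have step2 : ∀ c : Fin T.r,
      ∑ t, T.zb c * (T.EM (T.ach d * T.phi (b₁ t)) * T.EM (T.wb c * T.phi (b₂ t)))
      = T.lam ^ 2 • (T.zb c * T.EM (T.wb c * (T.phi b * T.zb d))) := by
    intro c
    rw [← Finset.mul_sum, T.DeltaR hb hb₁ hb₂ hΔ (T.ach_mem d) (hwA c)]
    rw [mul_smul_comm]
    congr 2
    rw [mul_assoc, T.EM_transp d (mul_mem (T.hwbM₁ c) (T.phi_memM₁ b))
      (fun n hn => comm_mul (T.hwbN c n hn) (T.phi_commN hb n hn)), mul_assoc]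
  calc ∑ t, T.phi (b₂ t) * T.EM (T.phi (b₁ t) * T.zb d)
      = ∑ t, ∑ c, T.zb c * (T.EM (T.ach d * T.phi (b₁ t)) * T.EM (T.wb c * T.phi (b₂ t))) :=
        Finset.sum_congr rfl fun t _ => step1 t
    _ = ∑ c, ∑ t, T.zb c * (T.EM (T.ach d * T.phi (b₁ t)) * T.EM (T.wb c * T.phi (b₂ t))) :=
        Finset.sum_comm
    _ = ∑ c, T.lam ^ 2 • (T.zb c * T.EM (T.wb c * (T.phi b * T.zb d))) :=
        Finset.sum_congr rfl fun c _ => step2 c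
    _ = T.lam ^ 2 • ∑ c, T.zb c * T.EM (T.wb c * (T.phi b * T.zb d)) := by
        rw [Finset.smul_sum]
    _ = T.lam ^ 2 • (T.phi b * T.zb d) := by
        rw [T.hzw_dual₂ _ (mul_mem (T.phi_memM₁ b) (T.hzbM₁ d))]

lemma copro (hb : b ∈ T.B) (hb₁ : ∀ i, b₁ i ∈ T.B) (hb₂ : ∀ i, b₂ i ∈ T.B)
    (hΔ : ∀ a ∈ T.A, ∀ a' ∈ T.A,
      ∑ i, T.F (a * T.e₂ * T.e₁ * b₁ i) * T.F (a' * T.e₂ * T.e₁ * b₂ i) =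
        T.lam ^ 2 * T.F (a * a' * T.e₂ * T.e₁ * b))
    {g : R} (hg : g ∈ T.M₁) :
    ∑ t, T.phi (b₂ t) * T.EM (T.phi (b₁ t) * g) = T.lam ^ 2 • (T.phi b * g) := by
  have hexp : ∀ t : Fin m, T.EM (T.phi (b₁ t) * g)
      = ∑ d, T.EM (T.phi (b₁ t) * T.zb d) * T.EM (T.wb d * g) := by
    intro t
    conv_lhs => rw [← T.hzw_dual₂ g hg]
    rw [Finset.mul_sum, map_sum]
    refine Finset.sum_congr rfl fun d _ => ?_
    rw [← mul_assoc]
    exact T.EM_right (T.hEM_mem _ (mul_mem (T.hwbM₁ d) hg))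
      (mul_mem (T.phi_memM₁ (b₁ t)) (T.hzbM₁ d))
  calc ∑ t, T.phi (b₂ t) * T.EM (T.phi (b₁ t) * g)
      = ∑ t, ∑ d, T.phi (b₂ t) * T.EM (T.phi (b₁ t) * T.zb d) * T.EM (T.wb d * g) := by
        refine Finset.sum_congr rfl fun t _ => ?_
        rw [hexp t, Finset.mul_sum]
        exact Finset.sum_congr rfl fun d _ => (mul_assoc _ _ _).symm
    _ = ∑ d, (∑ t, T.phi (b₂ t) * T.EM (T.phi (b₁ t) * T.zb d)) * T.EM (T.wb d * g) := by
        rw [Finset.sum_comm]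
        exact Finset.sum_congr rfl fun d _ => (Finset.sum_mul _ _ _).symm
    _ = ∑ d, (T.lam ^ 2 • (T.phi b * T.zb d)) * T.EM (T.wb d * g) := by
        refine Finset.sum_congr rfl fun d _ => ?_
        rw [T.copro_z hb hb₁ hb₂ hΔ d]
    _ = T.lam ^ 2 • ∑ d, T.phi b * (T.zb d * T.EM (T.wb d * g)) := by
        rw [Finset.smul_sum]
        refine Finset.sum_congr rfl fun d _ => ?_
        rw [smul_mul_assoc, mul_assoc]
    _ = T.lam ^ 2 • (T.phi b * g) := by
        rw [← Finset.mul_sum, T.hzw_dual₂ g hg]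
lemma smash_rel (hb : b ∈ T.B) (hb₁ : ∀ i, b₁ i ∈ T.B) (hb₂ : ∀ i, b₂ i ∈ T.B)
    (hΔ : ∀ a ∈ T.A, ∀ a' ∈ T.A,
      ∑ i, T.F (a * T.e₂ * T.e₁ * b₁ i) * T.F (a' * T.e₂ * T.e₁ * b₂ i) =
        T.lam ^ 2 * T.F (a * a' * T.e₂ * T.e₁ * b)) :
    ∀ y ∈ T.M₁, b * y = T.lam⁻¹ • ∑ i, T.EM1 (b₁ i * y * T.e₂) * b₂ i := by
  intro y hy
  have hWmem : ∀ (t : Fin m) (p : Fin T.n₀), T.phi (b₁ t) * (T.yb p * y) ∈ T.M₁ :=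
    fun t p => mul_mem (T.phi_memM₁ _) (mul_mem (T.hMM₁ (T.hyb p)) hy)
  have stepA : ∀ t : Fin m, T.EM1 (b₁ t * y * T.e₂)
      = (T.lam⁻¹ * T.lam⁻¹ * T.lam) •
          ∑ p, T.xb p * (T.e₁ * T.EM (T.phi (b₁ t) * (T.yb p * y))) := by
    intro t
    have h1 : b₁ t * y * T.e₂
        = (T.lam⁻¹ * T.lam⁻¹) •
          ∑ p, (T.xb p * (T.e₁ * (T.e₂ * (T.phi (b₁ t) * T.yb p)))) * y * T.e₂ := by
      conv_lhs => rw [T.B_repr (hb₁ t)]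
      rw [smul_mul_assoc, smul_mul_assoc, Finset.sum_mul, Finset.sum_mul]
    have h2 : ∀ p, (T.xb p * (T.e₁ * (T.e₂ * (T.phi (b₁ t) * T.yb p)))) * y * T.e₂
        = (T.xb p * (T.e₁ * T.EM (T.phi (b₁ t) * (T.yb p * y)))) * T.e₂ := by
      intro p
      have hW := T.he₂we₂ _ (hWmem t p)
      simp only [mul_assoc] at hW ⊢
      rw [hW]
    have h3 : ∀ p, T.EM1 ((T.xb p * (T.e₁ * T.EM (T.phi (b₁ t) * (T.yb p * y)))) * T.e₂)
        = T.lam • (T.xb p * (T.e₁ * T.EM (T.phi (b₁ t) * (T.yb p * y)))) := by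
      intro p
      rw [T.EM1_left (mul_mem (T.hMM₁ (T.hxb p)) (mul_mem T.he₁
        (T.hMM₁ (T.hEM_mem _ (hWmem t p))))) T.e₂, T.hEM1e₂, mul_smul_comm, mul_one]
    rw [h1, map_smul, map_sum,
      Finset.sum_congr rfl fun p _ => (congrArg T.EM1 (h2 p)).trans (h3 p),
      ← Finset.smul_sum, smul_smul]
  have stepB : ∀ (t : Fin m) (p : Fin T.n₀),
      (T.xb p * (T.e₁ * T.EM (T.phi (b₁ t) * (T.yb p * y)))) * b₂ t
      = (T.lam⁻¹ * T.lam⁻¹) •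
        (T.xb p * (T.e₁ * (T.e₂ * (T.phi (b₂ t) * T.EM (T.phi (b₁ t) * (T.yb p * y)))))) := by
    intro t p
    have hEMW : T.EM (T.phi (b₁ t) * (T.yb p * y)) ∈ T.M := T.hEM_mem _ (hWmem t p)
    calc (T.xb p * (T.e₁ * T.EM (T.phi (b₁ t) * (T.yb p * y)))) * b₂ t
        = T.xb p * (T.e₁ * (T.EM (T.phi (b₁ t) * (T.yb p * y)) * b₂ t)) := by
          simp only [mul_assoc]
      _ = T.xb p * (T.e₁ * (b₂ t * T.EM (T.phi (b₁ t) * (T.yb p * y)))) := by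
          rw [T.B_comm (hb₂ t) hEMW]
      _ = T.xb p * ((T.e₁ * b₂ t) * T.EM (T.phi (b₁ t) * (T.yb p * y))) := by
          rw [mul_assoc]
      _ = T.xb p * (((T.lam⁻¹ * T.lam⁻¹) • (T.e₁ * (T.e₂ * T.phi (b₂ t))))
            * T.EM (T.phi (b₁ t) * (T.yb p * y))) := by
          rw [← T.e₁_mul]
      _ = (T.lam⁻¹ * T.lam⁻¹) •
            (T.xb p * (T.e₁ * (T.e₂ * (T.phi (b₂ t) * T.EM (T.phi (b₁ t) * (T.yb p * y)))))) := by
          rw [smul_mul_assoc, mul_smul_comm]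
          congr 1
          simp only [mul_assoc]
  have hsum : ∑ i, T.EM1 (b₁ i * y * T.e₂) * b₂ i
      = ((T.lam⁻¹ * T.lam⁻¹ * T.lam) * ((T.lam⁻¹ * T.lam⁻¹) * T.lam ^ 2)) •
        ∑ p, T.xb p * (T.e₁ * (T.e₂ * (T.phi b * (T.yb p * y)))) := by
    calc ∑ i, T.EM1 (b₁ i * y * T.e₂) * b₂ i
        = ∑ i, (T.lam⁻¹ * T.lam⁻¹ * T.lam) •
            ∑ p, (T.xb p * (T.e₁ * T.EM (T.phi (b₁ i) * (T.yb p * y)))) * b₂ i := by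
          refine Finset.sum_congr rfl fun i _ => ?_
          rw [stepA i, smul_mul_assoc, Finset.sum_mul]
      _ = (T.lam⁻¹ * T.lam⁻¹ * T.lam) • ∑ i, ∑ p, (T.lam⁻¹ * T.lam⁻¹) •
            (T.xb p * (T.e₁ * (T.e₂ * (T.phi (b₂ i) * T.EM (T.phi (b₁ i) * (T.yb p * y)))))) := by
          rw [← Finset.smul_sum]
          exact congrArg _ (Finset.sum_congr rfl fun i _ =>
            Finset.sum_congr rfl fun p _ => stepB i p)
      _ = (T.lam⁻¹ * T.lam⁻¹ * T.lam) • ((T.lam⁻¹ * T.lam⁻¹) •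
            ∑ p, T.xb p * (T.e₁ * (T.e₂ *
              (∑ i, T.phi (b₂ i) * T.EM (T.phi (b₁ i) * (T.yb p * y)))))) := by
          congr 1
          simp only [← Finset.smul_sum]
          congr 1
          rw [Finset.sum_comm]
          exact Finset.sum_congr rfl fun p _ => by simp only [Finset.mul_sum]
      _ = (T.lam⁻¹ * T.lam⁻¹ * T.lam) • ((T.lam⁻¹ * T.lam⁻¹) • (T.lam ^ 2 •
            ∑ p, T.xb p * (T.e₁ * (T.e₂ * (T.phi b * (T.yb p * y)))))) := by
          congr 2
          calc ∑ p, T.xb p * (T.e₁ * (T.e₂ *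
                (∑ i, T.phi (b₂ i) * T.EM (T.phi (b₁ i) * (T.yb p * y)))))
              = ∑ p, T.lam ^ 2 • (T.xb p * (T.e₁ * (T.e₂ * (T.phi b * (T.yb p * y))))) := by
                refine Finset.sum_congr rfl fun p _ => ?_
                rw [T.copro hb hb₁ hb₂ hΔ (mul_mem (T.hMM₁ (T.hyb p)) hy)]
                simp only [mul_smul_comm]
            _ = T.lam ^ 2 • ∑ p, T.xb p * (T.e₁ * (T.e₂ * (T.phi b * (T.yb p * y)))) := by
                rw [Finset.smul_sum]
      _ = ((T.lam⁻¹ * T.lam⁻¹ * T.lam) * ((T.lam⁻¹ * T.lam⁻¹) * T.lam ^ 2)) •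
            ∑ p, T.xb p * (T.e₁ * (T.e₂ * (T.phi b * (T.yb p * y)))) := by
          rw [smul_smul, smul_smul, mul_assoc]
  calc b * y
      = ((T.lam⁻¹ * T.lam⁻¹) • ∑ p, T.xb p * (T.e₁ * (T.e₂ * (T.phi b * T.yb p)))) * y := by
        conv_lhs => rw [T.B_repr hb]
    _ = (T.lam⁻¹ * T.lam⁻¹) • ∑ p, T.xb p * (T.e₁ * (T.e₂ * (T.phi b * (T.yb p * y)))) := by
        rw [smul_mul_assoc, Finset.sum_mul]
        congr 1
        refine Finset.sum_congr rfl fun p _ => ?_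
        simp only [mul_assoc]
    _ = T.lam⁻¹ • ∑ i, T.EM1 (b₁ i * y * T.e₂) * b₂ i := by
        rw [hsum, smul_smul]
        congr 1
        rw [show T.lam⁻¹ * (T.lam⁻¹ * T.lam⁻¹ * T.lam * (T.lam⁻¹ * T.lam⁻¹ * T.lam ^ 2))
            = (T.lam⁻¹ * T.lam) ^ 3 * (T.lam⁻¹ * T.lam⁻¹) by ring,
          inv_mul_cancel₀ T.hlam, one_pow, one_mul]
lemma ub_memB (j : Fin T.s) : T.ub j ∈ T.B := T.mem_B fun mm hmm => (T.hubM j mm hmm).symm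

lemma vb_memB (j : Fin T.s) : T.vb j ∈ T.B := T.mem_B fun mm hmm => (T.hvbM j mm hmm).symm

noncomputable def Psi :
    R →ₗ[k] (↥(Subalgebra.toSubmodule T.M₁) ⊗[k] ↥(Subalgebra.toSubmodule T.B)) :=
  ∑ j : Fin T.s,
    ((TensorProduct.mk k _ _).flip ⟨T.vb j, T.vb_memB j⟩).comp
      (LinearMap.codRestrict (Subalgebra.toSubmodule T.M₁)
        (T.EM1 ∘ₗ LinearMap.mulRight k (T.ub j)) fun x => T.hEM1_mem _)

lemma Psi_apply (x : R) : T.Psi x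
    = ∑ j, (⟨T.EM1 (x * T.ub j), T.hEM1_mem _⟩ : Subalgebra.toSubmodule T.M₁) ⊗ₜ[k]
        (⟨T.vb j, T.vb_memB j⟩ : Subalgebra.toSubmodule T.B) := by
  simp only [Psi, LinearMap.sum_apply]
  rfl

lemma mulMap_Psi (x : R) :
    (Subalgebra.toSubmodule T.M₁).mulMap (Subalgebra.toSubmodule T.B) (T.Psi x) = x := by
  rw [Psi_apply, map_sum]
  calc ∑ j, (Subalgebra.toSubmodule T.M₁).mulMap (Subalgebra.toSubmodule T.B)
        ((⟨T.EM1 (x * T.ub j), T.hEM1_mem _⟩ : Subalgebra.toSubmodule T.M₁) ⊗ₜ[k]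
          (⟨T.vb j, T.vb_memB j⟩ : Subalgebra.toSubmodule T.B))
      = ∑ j, T.EM1 (x * T.ub j) * T.vb j :=
        Finset.sum_congr rfl fun j _ => Submodule.mulMap_tmul _ _ _ _
    _ = x := T.huv_dual₁ x

lemma Psi_mulMap (t : ↥(Subalgebra.toSubmodule T.M₁) ⊗[k] ↥(Subalgebra.toSubmodule T.B)) :
    T.Psi ((Subalgebra.toSubmodule T.M₁).mulMap (Subalgebra.toSubmodule T.B) t) = t := by
  induction t using TensorProduct.induction_on with
  | zero => simp
  | add p q hp hq => rw [map_add, map_add, hp, hq]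
  | tmul xm bb =>
      obtain ⟨x, hx⟩ := xm
      obtain ⟨b'', hb''⟩ := bb
      rw [Submodule.mulMap_tmul, Psi_apply]
      have hBj : ∀ j : Fin T.s, b'' * T.ub j ∈ T.B := fun j => mul_mem hb'' (T.ub_memB j)
      choose μ hμ using fun j : Fin T.s => T.EM1_scalar fun mm hmm => T.B_comm (hBj j) hmm
      have hterm : ∀ j : Fin T.s,
          (⟨T.EM1 (x * b'' * T.ub j), T.hEM1_mem _⟩ : Subalgebra.toSubmodule T.M₁)
          = μ j • (⟨x, hx⟩ : Subalgebra.toSubmodule T.M₁) := by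
        intro j
        apply Subtype.ext
        show T.EM1 (x * b'' * T.ub j) = μ j • x
        rw [mul_assoc, T.EM1_left hx, hμ j, mul_smul_comm, mul_one]
      calc ∑ j, (⟨T.EM1 (x * b'' * T.ub j), T.hEM1_mem _⟩ : Subalgebra.toSubmodule T.M₁) ⊗ₜ[k]
              (⟨T.vb j, T.vb_memB j⟩ : Subalgebra.toSubmodule T.B)
          = ∑ j, (⟨x, hx⟩ : Subalgebra.toSubmodule T.M₁) ⊗ₜ[k]
              (μ j • (⟨T.vb j, T.vb_memB j⟩ : Subalgebra.toSubmodule T.B)) := by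
            refine Finset.sum_congr rfl fun j _ => ?_
            rw [hterm j, TensorProduct.smul_tmul]
        _ = (⟨x, hx⟩ : Subalgebra.toSubmodule T.M₁) ⊗ₜ[k]
              (∑ j, μ j • (⟨T.vb j, T.vb_memB j⟩ : Subalgebra.toSubmodule T.B)) := by
            rw [TensorProduct.tmul_sum]
        _ = (⟨x, hx⟩ : Subalgebra.toSubmodule T.M₁) ⊗ₜ[k]
              (⟨b'', hb''⟩ : Subalgebra.toSubmodule T.B) := by
            congr 1
            apply Subtype.ext
            rw [AddSubmonoidClass.coe_finset_sum]
            simp only [SetLike.val_smul]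
            calc ∑ j, μ j • T.vb j = ∑ j, T.EM1 (b'' * T.ub j) * T.vb j := by
                  refine Finset.sum_congr rfl fun j _ => ?_
                  rw [hμ j, smul_mul_assoc, one_mul]
              _ = b'' := T.huv_dual₁ b''
end Aux

end JonesTower


/-- **Smash product relation for `M₂`.** If `b ∈ B` and `∑ᵢ b₁⁽ⁱ⁾ ⊗ b₂⁽ⁱ⁾`
represents the comultiplication `Δ(b)` determined by the pairing
`⟨a, b⟩ = λ⁻² F(a e₂ e₁ b)`, then `b y = ∑ᵢ (b₁⁽ⁱ⁾ ⊳ y) b₂⁽ⁱ⁾` for every `y ∈ M₁`,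
where `b ⊳ y = λ⁻¹ E_{M₁}(b y e₂)` is the Ocneanu–Szymański action. Together with
the bijectivity of the multiplication map `M₁ ⊗ₖ B → M₂`, this says that `M₂` is
the smash product `M₁ # B` via `x ⊗ b ↦ xb`. -/
theorem smash_product_relation (T : JonesTower k R) [Nontrivial R]
    (b : R) (hb : b ∈ T.B) (m : ℕ) (b₁ b₂ : Fin m → R)
    (hb₁ : ∀ i, b₁ i ∈ T.B) (hb₂ : ∀ i, b₂ i ∈ T.B)
    (hΔ : ∀ a ∈ T.A, ∀ a' ∈ T.A,
      ∑ i, T.F (a * T.e₂ * T.e₁ * b₁ i) * T.F (a' * T.e₂ * T.e₁ * b₂ i) =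
        T.lam ^ 2 * T.F (a * a' * T.e₂ * T.e₁ * b)) :
    (∀ y ∈ T.M₁, b * y = T.lam⁻¹ • ∑ i, T.EM1 (b₁ i * y * T.e₂) * b₂ i) ∧
    Function.Injective
      ((Subalgebra.toSubmodule T.M₁).mulMap (Subalgebra.toSubmodule T.B)) ∧
    LinearMap.range
      ((Subalgebra.toSubmodule T.M₁).mulMap (Subalgebra.toSubmodule T.B)) = ⊤ := by
  refine ⟨T.smash_rel hb hb₁ hb₂ hΔ, ?_, ?_⟩
  · intro t₁ t₂ h
    have h2 := congrArg T.Psi h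
    rwa [T.Psi_mulMap, T.Psi_mulMap] at h2
  · rw [LinearMap.range_eq_top]
    exact fun x => ⟨T.Psi x, T.mulMap_Psi x⟩
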